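/- Weak equivariant log concavity with no internal zeros is not preserved under tensor products: there exist graded representations V and W of S_2, each weakly equivariantly log concave with no internal zeros, such that V ⊗ W is not weakly equivariantly log concave. Explicitly, take V with V^0 = V^3 = τ ⊕ σ^{⊕3}, V^1 = V^2 = τ^{⊕2} ⊕ σ^{⊕2}, V^i = 0 otherwise, and W with W^0 = W^1 = τ, W^i = 0 for i > 1; then (V⊗W)^1 ⊗ (V⊗W)^3 does not embed into (V⊗W)^2 ⊗ (V⊗W)^2. -/

import Mathlib

open CategoryTheory MonoidalCategory

noncomputable section

/-- The external direct sum of a finite family of representations. -/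
def Representation.pi' {k G : Type*} [CommSemiring k] [Monoid G] {ι : Type*}
    {M : ι → Type*} [∀ i, AddCommMonoid (M i)] [∀ i, Module k (M i)]
    (ρ : ∀ i, Representation k G (M i)) : Representation k G (∀ i, M i) where
  toFun g := LinearMap.pi fun i => (ρ i g) ∘ₗ LinearMap.proj i
  map_one' := by ext; simp
  map_mul' g h := by ext; simp

/-- The sign representation of `S₂` on `ℚ`. -/
def signRepAux : Representation ℚ (Equiv.Perm (Fin 2)) ℚ where
  toFun g := ((Equiv.Perm.sign g : ℤ) : ℚ) • LinearMap.id
  map_one' := by simp; rfl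
  map_mul' g h := by ext; simp [smul_smul]; ring

/-- `τ^{⊕ a} ⊕ σ^{⊕ b}`, where `τ` is the trivial representation of `S₂` and `σ` is the
sign representation. -/
def VS2 (a b : ℕ) : FDRep ℚ (Equiv.Perm (Fin 2)) :=
  FDRep.of (Representation.pi' fun x : Fin a ⊕ Fin b =>
    Sum.elim (fun _ => Representation.trivial ℚ (G := Equiv.Perm (Fin 2)) (V := ℚ))
      (fun _ => signRepAux) x)

/-- `X` is isomorphic to a subrepresentation of `Y`. -/
def IsSubrep (X Y : FDRep ℚ (Equiv.Perm (Fin 2))) : Prop := ∃ f : X ⟶ Y, Mono f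

/-- A graded representation is weakly equivariantly log concave if `V^{i-1} ⊗ V^{i+1}`
is isomorphic to a subrepresentation of `V^i ⊗ V^i` for all `i ≥ 1`. -/
def WeakELC (V : ℕ → FDRep ℚ (Equiv.Perm (Fin 2))) : Prop :=
  ∀ i : ℕ, 1 ≤ i → IsSubrep (V (i - 1) ⊗ V (i + 1)) (V i ⊗ V i)

/-- The degree-`m` piece `⊕_{p+q=m} V^p ⊗ W^q` of the tensor product of two graded
representations. -/
def gradedTensor (V W : ℕ → FDRep ℚ (Equiv.Perm (Fin 2))) (m : ℕ) :
    FDRep ℚ (Equiv.Perm (Fin 2)) :=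
  FDRep.of (Representation.pi' fun p : Fin (m + 1) =>
    Representation.tprod (V p).ρ (W (m - (p : ℕ))).ρ)

/-- `V^0 = V^3 = τ ⊕ σ^{⊕3}`, `V^1 = V^2 = τ^{⊕2} ⊕ σ^{⊕2}`, `V^i = 0` otherwise. -/
def Vex : ℕ → FDRep ℚ (Equiv.Perm (Fin 2)) := fun i =>
  if i = 0 ∨ i = 3 then VS2 1 3 else if i = 1 ∨ i = 2 then VS2 2 2 else VS2 0 0

/-- `W^0 = W^1 = τ` and `W^i = 0` for `i > 1`. -/
def Wex : ℕ → FDRep ℚ (Equiv.Perm (Fin 2)) := fun i =>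
  if i ≤ 1 then VS2 1 0 else VS2 0 0


namespace Stmt9Aux
open Module LinearMap

abbrev G2 := Equiv.Perm (Fin 2)

def s2 : G2 := Equiv.swap 0 1

lemma g2_cases (g : G2) : g = 1 ∨ g = s2 := by revert g; decide
lemma s2_mul_s2 : s2 * s2 = 1 := by decide
lemma e_s2 : ((Equiv.Perm.sign s2 : ℤ) : ℚ) = -1 := by norm_num [s2]
lemma e_one : ((Equiv.Perm.sign (1:G2) : ℤ) : ℚ) = 1 := by norm_num

lemma trace_pi {ι : Type} [Fintype ι] [DecidableEq ι] {M : ι → Type*}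
    [∀ i, AddCommGroup (M i)] [∀ i, Module ℚ (M i)] [∀ i, FiniteDimensional ℚ (M i)]
    (f : ∀ i, M i →ₗ[ℚ] M i) :
    trace ℚ (∀ i, M i) (LinearMap.pi fun i => f i ∘ₗ LinearMap.proj i)
      = ∑ i, trace ℚ (M i) (f i) := by
  let B : ∀ i, Basis (Fin (finrank ℚ (M i))) ℚ (M i) := fun i => Module.finBasis ℚ (M i)
  rw [trace_eq_matrix_trace ℚ (Pi.basis B), Matrix.trace, ← Finset.univ_sigma_univ,
    Finset.sum_sigma]
  refine Finset.sum_congr rfl fun i _ => ?_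
  rw [trace_eq_matrix_trace ℚ (B i), Matrix.trace]
  refine Finset.sum_congr rfl fun j _ => ?_
  simp [Matrix.diag, LinearMap.toMatrix_apply, Pi.basis_apply, Pi.basis_repr,
    LinearMap.pi_apply, Pi.single_eq_same]

lemma char_pi' {ι : Type} [Fintype ι] [DecidableEq ι] {M : ι → Type}
    [∀ i, AddCommGroup (M i)] [∀ i, Module ℚ (M i)] [∀ i, FiniteDimensional ℚ (M i)]
    (ρ : ∀ i, Representation ℚ G2 (M i)) (g : G2) :
    (FDRep.of (Representation.pi' ρ)).character g = ∑ i, trace ℚ (M i) (ρ i g) := by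
  show trace ℚ (∀ i, M i) (LinearMap.pi fun i => (ρ i g) ∘ₗ LinearMap.proj i) = _
  exact trace_pi _

lemma trace_trivial (g : G2) :
    trace ℚ ℚ ((Representation.trivial ℚ (G := G2) (V := ℚ)) g) = 1 := by
  show trace ℚ ℚ LinearMap.id = 1
  rw [trace_id]; simp

lemma trace_sign (g : G2) :
    trace ℚ ℚ (signRepAux g) = ((Equiv.Perm.sign g : ℤ) : ℚ) := by
  show trace ℚ ℚ (((Equiv.Perm.sign g : ℤ) : ℚ) • LinearMap.id) = _
  rw [map_smul, trace_id]; simp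

lemma char_VS2 (a b : ℕ) (g : G2) :
    (VS2 a b).character g = (a : ℚ) + (b : ℚ) * ((Equiv.Perm.sign g : ℤ) : ℚ) := by
  rw [VS2, char_pi', Fintype.sum_sum_type]
  simp only [Sum.elim_inl, Sum.elim_inr, trace_trivial, trace_sign]
  simp [mul_comm]

lemma char_graded (V W : ℕ → FDRep ℚ G2) (m : ℕ) (g : G2) :
    (gradedTensor V W m).character g
      = ∑ p : Fin (m + 1), (V p).character g * (W (m - (p : ℕ))).character g := by
  rw [gradedTensor, char_pi']
  refine Finset.sum_congr rfl fun p _ => ?_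
  show trace ℚ _ (TensorProduct.map ((V p).ρ g) ((W (m - (p:ℕ))).ρ g)) = _
  exact trace_tensorProduct' _ _

end Stmt9Aux

namespace Stmt9Aux
open Module LinearMap

variable (X Y : FDRep ℚ G2)

def TX : X →ₗ[ℚ] X := X.ρ s2

lemma TX_invol (x : X) : TX X (TX X x) = x := by
  have : X.ρ s2 * X.ρ s2 = 1 := by rw [← map_mul, s2_mul_s2, map_one]
  calc TX X (TX X x) = (X.ρ s2 * X.ρ s2) x := rfl
    _ = x := by rw [this]; rfl

def Ep : Submodule ℚ X := ker (TX X - LinearMap.id)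
def Em : Submodule ℚ X := ker (TX X + LinearMap.id)

def ap : ℕ := finrank ℚ (Ep X)
def bp : ℕ := finrank ℚ (Em X)

def PX : X →ₗ[ℚ] X := (2⁻¹ : ℚ) • (LinearMap.id + TX X)
def QX : X →ₗ[ℚ] X := (2⁻¹ : ℚ) • (LinearMap.id - TX X)

lemma PX_apply (x : X) : PX X x = (2⁻¹ : ℚ) • (x + TX X x) := rfl
lemma QX_apply (x : X) : QX X x = (2⁻¹ : ℚ) • (x - TX X x) := rfl

lemma mem_Ep {x : X} : x ∈ Ep X ↔ TX X x = x := by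
  simp [Ep, LinearMap.mem_ker, sub_eq_zero]

lemma mem_Em {x : X} : x ∈ Em X ↔ TX X x = -x := by
  constructor
  · intro h
    have : TX X x + x = 0 := by simpa [Em, LinearMap.mem_ker] using h
    linear_combination (norm := abel) this
  · intro h
    simp [Em, LinearMap.mem_ker, h]

lemma TX_PX (x : X) : TX X (PX X x) = PX X x := by
  rw [PX_apply, map_smul, map_add, TX_invol, add_comm]

lemma TX_QX (x : X) : TX X (QX X x) = -QX X x := by
  rw [QX_apply, map_smul, map_sub, TX_invol, ← smul_neg, neg_sub]

lemma PX_mem_Ep (x : X) : PX X x ∈ Ep X := (mem_Ep X).2 (TX_PX X x)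
lemma QX_mem_Em (x : X) : QX X x ∈ Em X := (mem_Em X).2 (TX_QX X x)

lemma isProj_PX : IsProj (Ep X) (PX X) := by
  refine ⟨PX_mem_Ep X, fun x hx => ?_⟩
  rw [PX_apply, (mem_Ep X).1 hx, ← two_smul ℚ x, smul_smul]
  norm_num

lemma isProj_QX : IsProj (Em X) (QX X) := by
  refine ⟨QX_mem_Em X, fun x hx => ?_⟩
  rw [QX_apply, (mem_Em X).1 hx, sub_neg_eq_add, ← two_smul ℚ x, smul_smul]
  norm_num

lemma ker_PX : ker (PX X) = Em X := by
  ext x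
  simp only [LinearMap.mem_ker, PX_apply, smul_eq_zero]
  constructor
  · intro h
    rcases h with h | h
    · norm_num at h
    · exact (mem_Em X).2 (by linear_combination (norm := abel) h)
  · intro h
    right
    rw [(mem_Em X).1 h]
    abel

lemma isCompl_Ep_Em : IsCompl (Ep X) (Em X) := by
  have := (isProj_PX X).isCompl
  rwa [ker_PX] at this

lemma ap_add_bp : ap X + bp X = finrank ℚ X :=
  Submodule.finrank_add_eq_of_isCompl (isCompl_Ep_Em X)

lemma char_s2_eq : X.character s2 = 2 * (ap X : ℚ) - (finrank ℚ X : ℚ) := by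
  have hP : trace ℚ X (PX X) = (ap X : ℚ) := (isProj_PX X).trace
  have hT : TX X = (2 : ℚ) • PX X - LinearMap.id := by
    rw [PX, smul_smul]
    norm_num
  have : X.character s2 = trace ℚ X (TX X) := rfl
  rw [this, hT, map_sub, map_smul, hP, trace_id, smul_eq_mul]

lemma ap_bp_of_char (a b : ℕ) (h1 : X.character 1 = (a : ℚ) + (b : ℚ))
    (hs : X.character s2 = (a : ℚ) - (b : ℚ)) : ap X = a ∧ bp X = b := by
  have hd : (finrank ℚ X : ℚ) = (a : ℚ) + (b : ℚ) := by
    rw [← FDRep.char_one X]; exact h1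
  have hd' : finrank ℚ X = a + b := by exact_mod_cast hd
  have hc := char_s2_eq X
  rw [hs, hd] at hc
  have hap : (ap X : ℚ) = a := by linarith
  have hapn : ap X = a := by exact_mod_cast hap
  have := ap_add_bp X
  omega

end Stmt9Aux

namespace Stmt9Aux
open Module LinearMap

variable {X Y : FDRep ℚ G2}

lemma hom_comm_apply (f : X ⟶ Y) (g : G2) (x : X) :
    f.hom (X.ρ g x) = Y.ρ g (f.hom x) :=
  ConcreteCategory.congr_hom (f.comm g) x

lemma PX_add_QX (X : FDRep ℚ G2) (x : X) : PX X x + QX X x = x := by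
  rw [PX_apply, QX_apply, ← smul_add]
  have h : (x + TX X x) + (x - TX X x) = (2 : ℚ) • x := by rw [two_smul]; abel
  rw [h, smul_smul]
  norm_num

lemma injective_of_mono (f : X ⟶ Y) (hf : Mono f) :
    Function.Injective (ConcreteCategory.hom f.hom : X →ₗ[ℚ] Y) := by
  rw [← LinearMap.ker_eq_bot]
  set K := LinearMap.ker (ConcreteCategory.hom f.hom : X →ₗ[ℚ] Y) with hK
  have hinv : ∀ (g : G2), ∀ x ∈ K, X.ρ g x ∈ K := by
    intro g x hx
    have hx0 : f.hom x = 0 := LinearMap.mem_ker.mp hx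
    refine LinearMap.mem_ker.mpr ?_
    exact (hom_comm_apply f g x).trans (by rw [hx0, map_zero])
  let ρK : Representation ℚ G2 K :=
    { toFun := fun g => (X.ρ g).restrict (hinv g)
      map_one' := by
        ext x
        simp [LinearMap.restrict_apply, Module.End.one_apply]
      map_mul' := fun g h => by
        ext x
        show X.ρ (g * h) x.1 = (X.ρ g) ((X.ρ h) x.1)
        rw [map_mul, Module.End.mul_apply] }
  let Z : FDRep ℚ G2 := FDRep.of ρK
  let ι : Z ⟶ X :=
    { hom := FGModuleCat.ofHom (K.subtype : K →ₗ[ℚ] X)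
      comm := fun g => by ext x; rfl }
  have h0 : ι ≫ f = (0 : Z ⟶ X) ≫ f := by
    apply Action.hom_ext
    rw [Action.comp_hom, Action.comp_hom, Action.zero_hom, Limits.zero_comp]
    ext x
    exact LinearMap.mem_ker.mp x.2
  have hι : ι = 0 := (cancel_mono f).mp h0
  rw [Submodule.eq_bot_iff]
  intro x hx
  have h1 : (K.subtype : K →ₗ[ℚ] X) ⟨x, hx⟩ = 0 := by
    rw [show (K.subtype : K →ₗ[ℚ] X) = ConcreteCategory.hom ι.hom from rfl, hι]
    rfl
  simpa using h1

lemma ap_mono (h : IsSubrep X Y) : ap X ≤ ap Y := by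
  obtain ⟨f, hf⟩ := h
  have hinj := injective_of_mono f hf
  have hmap : ∀ x ∈ Ep X, f.hom x ∈ Ep Y := by
    intro x hx
    rw [mem_Ep] at hx ⊢
    show Y.ρ s2 (f.hom x) = f.hom x
    rw [← hom_comm_apply, show X.ρ s2 x = x from hx]
  have hinj' : Function.Injective ((ConcreteCategory.hom f.hom : X →ₗ[ℚ] Y).restrict hmap) := by
    intro a b hab
    apply Subtype.ext
    apply hinj
    exact congrArg Subtype.val hab
  exact LinearMap.finrank_le_finrank_of_injective hinj'

lemma exists_injective_of_finrank_le {M N : Type} [AddCommGroup M] [Module ℚ M]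
    [AddCommGroup N] [Module ℚ N] [FiniteDimensional ℚ M] [FiniteDimensional ℚ N]
    (h : finrank ℚ M ≤ finrank ℚ N) : ∃ f : M →ₗ[ℚ] N, Function.Injective f := by
  let bM := Module.finBasis ℚ M
  let bN := Module.finBasis ℚ N
  let j : (Fin (finrank ℚ M) → ℚ) →ₗ[ℚ] (Fin (finrank ℚ N) → ℚ) :=
    Function.ExtendByZero.linearMap ℚ (Fin.castLE h)
  have hj : Function.Injective j := by
    intro u v huv
    funext i
    have h2 := congrFun huv (Fin.castLE h i)
    simp only [j, Function.ExtendByZero.linearMap_apply] at h2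
    rwa [(Fin.castLE_injective h).extend_apply, (Fin.castLE_injective h).extend_apply] at h2
  exact ⟨bN.equivFun.symm.toLinearMap ∘ₗ j ∘ₗ bM.equivFun.toLinearMap,
    (bN.equivFun.symm.injective.comp hj).comp bM.equivFun.injective⟩

lemma isSubrep_of_le (X Y : FDRep ℚ G2) (h1 : ap X ≤ ap Y) (h2 : bp X ≤ bp Y) :
    IsSubrep X Y := by
  obtain ⟨φp, hφp⟩ := exists_injective_of_finrank_le (M := Ep X) (N := Ep Y) h1
  obtain ⟨φm, hφm⟩ := exists_injective_of_finrank_le (M := Em X) (N := Em Y) h2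
  let πp : X →ₗ[ℚ] Ep X := (isProj_PX X).codRestrict
  let πm : X →ₗ[ℚ] Em X := (isProj_QX X).codRestrict
  let f0 : X →ₗ[ℚ] Y :=
    (Ep Y).subtype ∘ₗ φp ∘ₗ πp + (Em Y).subtype ∘ₗ φm ∘ₗ πm
  have hπp : ∀ x : X, ((πp x : X)) = PX X x := fun x => rfl
  have hπm : ∀ x : X, ((πm x : X)) = QX X x := fun x => rfl
  have hf0 : ∀ x : X, f0 x = (φp (πp x) : Y) + (φm (πm x) : Y) := fun x => rfl
  have hker : ∀ x : X, f0 x = 0 → x = 0 := by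
    intro x hx
    have hsum : (φp (πp x) : Y) + (φm (πm x) : Y) = 0 := by rw [← hf0, hx]
    have hmemEm : (φp (πp x) : Y) ∈ Em Y := by
      rw [eq_neg_of_add_eq_zero_left hsum]
      exact neg_mem (φm (πm x)).2
    have hz1 : (φp (πp x) : Y) = 0 :=
      Submodule.disjoint_def.mp (isCompl_Ep_Em Y).disjoint _ (φp (πp x)).2 hmemEm
    have hz2 : (φm (πm x) : Y) = 0 := by
      rw [hz1, zero_add] at hsum
      exact hsum
    have hp0 : πp x = 0 := by
      apply hφp
      rw [map_zero]
      exact Subtype.ext hz1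
    have hm0 : πm x = 0 := by
      apply hφm
      rw [map_zero]
      exact Subtype.ext hz2
    have := PX_add_QX X x
    rw [← hπp, ← hπm, hp0, hm0] at this
    simpa using this.symm
  have hinj : Function.Injective f0 := by
    intro a b hab
    have : f0 (a - b) = 0 := by rw [map_sub, hab, sub_self]
    have := hker _ this
    exact sub_eq_zero.mp this
  have hcomm : ∀ g : G2, f0 ∘ₗ (X.ρ g : X →ₗ[ℚ] X) = (Y.ρ g : Y →ₗ[ℚ] Y) ∘ₗ f0 := by
    intro g
    rcases g2_cases g with hg | hg
    · rw [hg, map_one, map_one]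
      ext x
      rfl
    · rw [hg]
      ext x
      show f0 (TX X x) = TX Y (f0 x)
      have h1 : πp (TX X x) = πp x := by
        apply Subtype.ext
        rw [hπp, hπp, PX_apply, PX_apply, TX_invol, add_comm]
      have h2 : πm (TX X x) = - πm x := by
        apply Subtype.ext
        show (πm (TX X x) : X) = -(πm x : X)
        rw [hπm, hπm, QX_apply, QX_apply, TX_invol, ← smul_neg, neg_sub]
      have hup : TX Y ((φp (πp x) : Y)) = (φp (πp x) : Y) := (mem_Ep Y).1 (φp (πp x)).2
      have hum : TX Y ((φm (πm x) : Y)) = -(φm (πm x) : Y) := (mem_Em Y).1 (φm (πm x)).2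
      have lhs : f0 (TX X x) = (φp (πp x) : Y) - (φm (πm x) : Y) := by
        rw [hf0, h1, h2, map_neg]
        simp [sub_eq_add_neg]
      have rhs : TX Y (f0 x) = (φp (πp x) : Y) - (φm (πm x) : Y) := by
        rw [hf0, map_add, hup, hum, sub_eq_add_neg]
      rw [lhs, rhs]
  let F : X ⟶ Y := { hom := FGModuleCat.ofHom f0, comm := fun g => by ext x; exact LinearMap.congr_fun (hcomm g) x }
  refine ⟨F, ?_⟩
  exact ConcreteCategory.mono_of_injective F hinj

lemma isSubrep_of_char (X Y : FDRep ℚ G2) (a b a' b' : ℕ)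
    (hX1 : X.character 1 = (a : ℚ) + (b : ℚ)) (hXs : X.character s2 = (a : ℚ) - (b : ℚ))
    (hY1 : Y.character 1 = (a' : ℚ) + (b' : ℚ)) (hYs : Y.character s2 = (a' : ℚ) - (b' : ℚ))
    (ha : a ≤ a') (hb : b ≤ b') : IsSubrep X Y := by
  obtain ⟨hx1, hx2⟩ := ap_bp_of_char X a b hX1 hXs
  obtain ⟨hy1, hy2⟩ := ap_bp_of_char Y a' b' hY1 hYs
  exact isSubrep_of_le X Y (by omega) (by omega)

end Stmt9Aux

namespace Stmt9Aux
open Module LinearMap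

lemma char_tensor' (X Y : FDRep ℚ G2) (g : G2) :
    (X ⊗ Y).character g = X.character g * Y.character g := by
  have := congrFun (FDRep.char_tensor X Y) g
  simpa using this

lemma char_VS2_one (a b : ℕ) : (VS2 a b).character 1 = (a : ℚ) + b := by
  rw [char_VS2, e_one, mul_one]
lemma char_VS2_s2 (a b : ℕ) : (VS2 a b).character s2 = (a : ℚ) - b := by
  rw [char_VS2, e_s2]; ring

lemma finrank_VS2 (a b : ℕ) : finrank ℚ (VS2 a b) = a + b := by
  have h := (FDRep.char_one (VS2 a b)).symm.trans (char_VS2_one a b)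
  exact_mod_cast h

lemma Vex_0 : Vex 0 = VS2 1 3 := by norm_num [Vex]
lemma Vex_1 : Vex 1 = VS2 2 2 := by norm_num [Vex]
lemma Vex_2 : Vex 2 = VS2 2 2 := by norm_num [Vex]
lemma Vex_3 : Vex 3 = VS2 1 3 := by norm_num [Vex]
lemma Vex_big (n : ℕ) : Vex (n + 4) = VS2 0 0 := by
  simp only [Vex]
  rw [if_neg (by omega), if_neg (by omega)]
lemma Wex_0 : Wex 0 = VS2 1 0 := by norm_num [Wex]
lemma Wex_1 : Wex 1 = VS2 1 0 := by norm_num [Wex]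
lemma Wex_big (n : ℕ) : Wex (n + 2) = VS2 0 0 := by
  simp only [Wex]
  rw [if_neg (by omega)]

lemma hVELC : WeakELC Vex := by
  intro i hi
  match i, hi with
  | 0, h => exact absurd h (by norm_num)
  | 1, _ =>
    refine isSubrep_of_char _ _ 8 8 8 8 ?_ ?_ ?_ ?_ le_rfl le_rfl
    · rw [char_tensor', show Vex (1-1) = Vex 0 from rfl, Vex_0, Vex_2, char_VS2_one,
        char_VS2_one]
      norm_num
    · rw [char_tensor', show Vex (1-1) = Vex 0 from rfl, Vex_0, Vex_2, char_VS2_s2,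
        char_VS2_s2]
      norm_num
    · rw [char_tensor', Vex_1, char_VS2_one]
      norm_num
    · rw [char_tensor', Vex_1, char_VS2_s2]
      norm_num
  | 2, _ =>
    refine isSubrep_of_char _ _ 8 8 8 8 ?_ ?_ ?_ ?_ le_rfl le_rfl
    · rw [char_tensor', show Vex (2-1) = Vex 1 from rfl, Vex_1, Vex_3, char_VS2_one,
        char_VS2_one]
      norm_num
    · rw [char_tensor', show Vex (2-1) = Vex 1 from rfl, Vex_1, Vex_3, char_VS2_s2,
        char_VS2_s2]
      norm_num
    · rw [char_tensor', Vex_2, char_VS2_one]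
      norm_num
    · rw [char_tensor', Vex_2, char_VS2_s2]
      norm_num
  | (n+3), _ =>
    have hz : Vex (n + 3 + 1) = VS2 0 0 := Vex_big n
    have hc : ∀ g : G2, (Vex (n+3-1) ⊗ Vex (n+3+1)).character g = 0 := by
      intro g
      rw [char_tensor', hz, char_VS2]
      norm_num
    obtain ⟨h1, h2⟩ := ap_bp_of_char (Vex (n+3-1) ⊗ Vex (n+3+1)) 0 0
      (by rw [hc 1]; norm_num) (by rw [hc s2]; norm_num)
    refine isSubrep_of_le _ _ ?_ ?_
    · rw [h1]; exact Nat.zero_le _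
    · rw [h2]; exact Nat.zero_le _

lemma hWELC : WeakELC Wex := by
  intro i hi
  obtain ⟨n, rfl⟩ : ∃ n, i = n + 1 := ⟨i - 1, by omega⟩
  have hz : Wex (n + 1 + 1) = VS2 0 0 := Wex_big n
  have hc : ∀ g : G2, (Wex (n+1-1) ⊗ Wex (n+1+1)).character g = 0 := by
    intro g
    rw [char_tensor', hz, char_VS2]
    norm_num
  obtain ⟨h1, h2⟩ := ap_bp_of_char (Wex (n+1-1) ⊗ Wex (n+1+1)) 0 0
    (by rw [hc 1]; norm_num) (by rw [hc s2]; norm_num)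
  refine isSubrep_of_le _ _ ?_ ?_
  · rw [h1]; exact Nat.zero_le _
  · rw [h2]; exact Nat.zero_le _

lemma fv2 : ((2 : Fin (2+1)) : ℕ) = 2 := rfl
lemma fv2' : ((2 : Fin (3+1)) : ℕ) = 2 := rfl
lemma fv3 : ((3 : Fin (3+1)) : ℕ) = 3 := rfl

lemma cgt1_one : (gradedTensor Vex Wex 1).character 1 = 8 := by
  rw [char_graded, Fin.sum_univ_two]
  simp only [Fin.val_zero, Fin.val_one, Nat.sub_zero, Nat.sub_self, Vex_0, Vex_1, Wex_0, Wex_1,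
    char_VS2_one]
  norm_num

lemma cgt1_s2 : (gradedTensor Vex Wex 1).character s2 = -2 := by
  rw [char_graded, Fin.sum_univ_two]
  simp only [Fin.val_zero, Fin.val_one, Nat.sub_zero, Nat.sub_self, Vex_0, Vex_1, Wex_0, Wex_1,
    char_VS2_s2]
  norm_num

lemma cgt2_one : (gradedTensor Vex Wex 2).character 1 = 8 := by
  rw [char_graded, Fin.sum_univ_three]
  simp only [Fin.val_zero, Fin.val_one, fv2, Nat.sub_zero, Nat.sub_self,
    show (2:ℕ) - 1 = 1 from rfl, Vex_0, Vex_1, Vex_2, Wex_0, Wex_1,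
    show Wex 2 = VS2 0 0 from Wex_big 0, char_VS2_one]
  norm_num

lemma cgt2_s2 : (gradedTensor Vex Wex 2).character s2 = 0 := by
  rw [char_graded, Fin.sum_univ_three]
  simp only [Fin.val_zero, Fin.val_one, fv2, Nat.sub_zero, Nat.sub_self,
    show (2:ℕ) - 1 = 1 from rfl, Vex_0, Vex_1, Vex_2, Wex_0, Wex_1,
    show Wex 2 = VS2 0 0 from Wex_big 0, char_VS2_s2]
  norm_num

lemma cgt3_one : (gradedTensor Vex Wex 3).character 1 = 8 := by
  rw [char_graded, Fin.sum_univ_four]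
  simp only [Fin.val_zero, Fin.val_one, fv2', fv3, Nat.sub_zero, Nat.sub_self,
    show (3:ℕ) - 1 = 2 from rfl, show (3:ℕ) - 2 = 1 from rfl, Vex_0, Vex_1, Vex_2, Vex_3,
    Wex_0, Wex_1, show Wex 2 = VS2 0 0 from Wex_big 0,
    show Wex 3 = VS2 0 0 from Wex_big 1, char_VS2_one]
  norm_num

lemma cgt3_s2 : (gradedTensor Vex Wex 3).character s2 = -2 := by
  rw [char_graded, Fin.sum_univ_four]
  simp only [Fin.val_zero, Fin.val_one, fv2', fv3, Nat.sub_zero, Nat.sub_self,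
    show (3:ℕ) - 1 = 2 from rfl, show (3:ℕ) - 2 = 1 from rfl, Vex_0, Vex_1, Vex_2, Vex_3,
    Wex_0, Wex_1, show Wex 2 = VS2 0 0 from Wex_big 0,
    show Wex 3 = VS2 0 0 from Wex_big 1, char_VS2_s2]
  norm_num

lemma hNeg : ¬ IsSubrep (gradedTensor Vex Wex 1 ⊗ gradedTensor Vex Wex 3)
    (gradedTensor Vex Wex 2 ⊗ gradedTensor Vex Wex 2) := by
  intro h
  obtain ⟨hx1, _⟩ := ap_bp_of_char (gradedTensor Vex Wex 1 ⊗ gradedTensor Vex Wex 3) 34 30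
    (by rw [char_tensor', cgt1_one, cgt3_one]; norm_num)
    (by rw [char_tensor', cgt1_s2, cgt3_s2]; norm_num)
  obtain ⟨hy1, _⟩ := ap_bp_of_char (gradedTensor Vex Wex 2 ⊗ gradedTensor Vex Wex 2) 32 32
    (by rw [char_tensor', cgt2_one]; norm_num)
    (by rw [char_tensor', cgt2_s2]; norm_num)
  have := ap_mono h
  rw [hx1, hy1] at this
  omega

end Stmt9Aux


/-- Weak equivariant log concavity with no internal zeros is not preserved under tensor
products: `V` and `W` are weakly equivariantly log concave with no internal zeros, but
`(V ⊗ W)^1 ⊗ (V ⊗ W)^3` does not embed into `(V ⊗ W)^2 ⊗ (V ⊗ W)^2`, so `V ⊗ W` is not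
weakly equivariantly log concave. -/
theorem stmt9 :
    WeakELC Vex ∧
    (∀ i : ℕ, i ≤ 3 → Module.finrank ℚ (Vex i) ≠ 0) ∧
    (∀ i : ℕ, 3 < i → Module.finrank ℚ (Vex i) = 0) ∧
    WeakELC Wex ∧
    (∀ i : ℕ, i ≤ 1 → Module.finrank ℚ (Wex i) ≠ 0) ∧
    (∀ i : ℕ, 1 < i → Module.finrank ℚ (Wex i) = 0) ∧
    ¬ IsSubrep (gradedTensor Vex Wex 1 ⊗ gradedTensor Vex Wex 3)
        (gradedTensor Vex Wex 2 ⊗ gradedTensor Vex Wex 2) ∧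
    ¬ WeakELC (gradedTensor Vex Wex) := by
  refine ⟨Stmt9Aux.hVELC, ?_, ?_, Stmt9Aux.hWELC, ?_, ?_, Stmt9Aux.hNeg, ?_⟩
  · intro i hi
    interval_cases i
    · rw [Stmt9Aux.Vex_0, Stmt9Aux.finrank_VS2]; norm_num
    · rw [Stmt9Aux.Vex_1, Stmt9Aux.finrank_VS2]; norm_num
    · rw [Stmt9Aux.Vex_2, Stmt9Aux.finrank_VS2]; norm_num
    · rw [Stmt9Aux.Vex_3, Stmt9Aux.finrank_VS2]; norm_num
  · intro i hi
    obtain ⟨n, rfl⟩ : ∃ n, i = n + 4 := ⟨i - 4, by omega⟩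
    rw [Stmt9Aux.Vex_big, Stmt9Aux.finrank_VS2]
  · intro i hi
    interval_cases i
    · rw [Stmt9Aux.Wex_0, Stmt9Aux.finrank_VS2]; norm_num
    · rw [Stmt9Aux.Wex_1, Stmt9Aux.finrank_VS2]; norm_num
  · intro i hi
    obtain ⟨n, rfl⟩ : ∃ n, i = n + 2 := ⟨i - 2, by omega⟩
    rw [Stmt9Aux.Wex_big, Stmt9Aux.finrank_VS2]
  · intro h
    exact Stmt9Aux.hNeg (by simpa using h 2 (by norm_num))

end
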